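/- Let k ≥ 1 and a_1 ≥ … ≥ a_m ≥ 1 be integers with n = a_1 + … + a_m, and let A be the set of partitions of k+n of the form (k', a'_1, …, a'_m) with 0 ≤ a'_i ≤ a_i and k' = k + n − ∑_i a'_i (note automatically k' ≥ k). Then A has a minimum element with respect to the dominance order; equivalently, A has a unique minimal element. -/

import Mathlib

/-- Sum of the `r` largest elements of a multiset of naturals. -/
def topSum (s : Multiset ℕ) (r : ℕ) : ℕ :=
  (((s.sort (· ≤ ·)).reverse).take r).sum

/-- `a` dominates `b` (as partitions). -/
def Dominates (a b : Multiset ℕ) : Prop := ∀ r : ℕ, topSum b r ≤ topSum a r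

namespace Stmt18

lemma list_sum_map_add (l : List ℕ) (f g : ℕ → ℕ) :
    (l.map (fun x => f x + g x)).sum = (l.map f).sum + (l.map g).sum := by
  induction l with
  | nil => simp
  | cons x l ih => simp [ih]; ring

lemma take_sum_le (l : List ℕ) (r c : ℕ) :
    (l.take r).sum ≤ r * c + (l.map (fun x => x - c)).sum := by
  have h1 : (l.take r).sum ≤ ((l.take r).map (fun x => c + (x - c))).sum := by
    calc (l.take r).sum = ((l.take r).map id).sum := by simp
    _ ≤ _ := List.sum_le_sum (fun i _ => by simp; omega)
  have h2 : ((l.take r).map (fun x => c + (x - c))).sum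
      = ((l.take r).map (fun _ => c)).sum + ((l.take r).map (fun x => x - c)).sum :=
    list_sum_map_add _ _ _
  have h3 : ((l.take r).map (fun _ => c)).sum ≤ r * c := by
    simp only [List.map_const', List.sum_replicate, smul_eq_mul, List.length_take]
    exact Nat.mul_le_mul_right c (min_le_left _ _)
  have h4 : ((l.take r).map (fun x => x - c)).sum ≤ (l.map (fun x => x - c)).sum := by
    rw [List.map_take]
    have := List.sum_take_add_sum_drop (l.map (fun x => x - c)) r
    omega
  omega

lemma topSum_le_bound (s : Multiset ℕ) (r c : ℕ) :
    topSum s r ≤ r * c + (s.map (fun x => x - c)).sum := by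
  have h1 : (s.map (fun x => x - c)).sum
      = (((s.sort (· ≤ ·)).reverse).map (fun x => x - c)).sum := by
    rw [List.map_reverse, List.sum_reverse]
    conv_lhs => rw [← Multiset.sort_eq s (· ≤ ·)]
    rw [Multiset.map_coe, Multiset.sum_coe]
  rw [topSum, h1]
  exact take_sum_le _ _ _

lemma take_succ_sum_le (x : ℕ) (l : List ℕ) (h : ∀ y ∈ l, y ≤ x) (r : ℕ) :
    (l.take (r+1)).sum ≤ x + (l.take r).sum := by
  rw [List.take_add, List.sum_append]
  have : ((l.drop r).take 1).sum ≤ x := by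
    cases hd : l.drop r with
    | nil => simp
    | cons z t =>
      simp
      exact h z (List.mem_of_mem_drop (by rw [hd]; exact List.mem_cons_self))
  omega

lemma sum_le_take_of_sorted (l : List ℕ) (hl : l.Pairwise (fun x y => y ≤ x)) :
    ∀ (r : ℕ) (t : Multiset ℕ), t ≤ ↑l → Multiset.card t ≤ r → t.sum ≤ (l.take r).sum := by
  induction l with
  | nil =>
    intro r t ht _
    have : t = 0 := Multiset.le_zero.1 ht
    simp [this]
  | cons x l ih =>
    intro r t ht hc
    have hx : ∀ y ∈ l, y ≤ x := (List.pairwise_cons.1 hl).1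
    have hl' := (List.pairwise_cons.1 hl).2
    cases r with
    | zero =>
      have : t = 0 := by rwa [Nat.le_zero, Multiset.card_eq_zero] at hc
      simp [this]
    | succ r =>
      by_cases hmem : x ∈ t
      · have h1 : t.erase x ≤ ↑l := by
          have h := Multiset.erase_le_erase x ht
          rwa [show ((x :: l : List ℕ) : Multiset ℕ) = x ::ₘ ↑l from rfl,
            Multiset.erase_cons_head] at h
        have h2 : Multiset.card (t.erase x) ≤ r := by
          rw [Multiset.card_erase_of_mem hmem, Nat.pred_eq_sub_one]
          omega
        have h3 := ih hl' r (t.erase x) h1 h2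
        have h4 : t.sum = x + (t.erase x).sum := by
          conv_lhs => rw [← Multiset.cons_erase hmem]
          rw [Multiset.sum_cons]
        simp [List.take_succ_cons]
        omega
      · have h1 : t ≤ ↑l := by
          rw [Multiset.le_iff_count]
          intro y
          by_cases hyx : y = x
          · subst hyx; simp [Multiset.count_eq_zero_of_notMem hmem]
          · have h := Multiset.le_iff_count.1 ht y
            rwa [show ((x :: l : List ℕ) : Multiset ℕ) = x ::ₘ ↑l from rfl,
              Multiset.count_cons_of_ne hyx] at h
        calc t.sum ≤ (l.take (r+1)).sum := ih hl' (r+1) t h1 hc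
        _ ≤ x + (l.take r).sum := take_succ_sum_le x l hx r
        _ = ((x :: l).take (r+1)).sum := by simp [List.take_succ_cons]

lemma sum_le_topSum (t s : Multiset ℕ) (r : ℕ) (ht : t ≤ s) (hc : Multiset.card t ≤ r) :
    t.sum ≤ topSum s r := by
  have hsort : ((s.sort (· ≤ ·)).reverse).Pairwise (fun x y => y ≤ x) := by
    rw [List.pairwise_reverse]
    exact Multiset.pairwise_sort s _
  have hcoe : ((((s.sort (· ≤ ·)).reverse : List ℕ)) : Multiset ℕ) = s := by
    rw [Multiset.coe_reverse, Multiset.sort_eq]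
  exact sum_le_take_of_sorted _ hsort r t (by rw [hcoe]; exact ht) hc

lemma filter_pos_sum (s : Multiset ℕ) : (s.filter (fun x => 0 < x)).sum = s.sum := by
  conv_rhs => rw [← Multiset.filter_add_not (fun x => 0 < x) s]
  rw [Multiset.sum_add]
  have h : (s.filter (fun x => ¬ 0 < x)).sum = 0 :=
    Multiset.sum_eq_zero (by intro x hx; have := (Multiset.mem_filter.1 hx).2; omega)
  omega

lemma topSum_zero (s : Multiset ℕ) : topSum s 0 = 0 := by simp [topSum]

end Stmt18

set_option maxHeartbeats 1000000 in
/-- if `a_1 ≥ … ≥ a_m ≥ 1` and `n = ∑ a_i`, the set `A` of partitions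
`(k', a'_1, …, a'_m)` of `k + n` with `0 ≤ a'_i ≤ a_i` and `k' = k + n - ∑ a'_i`
(zero parts discarded) has a minimum element for the dominance order. -/
theorem stmt_18 (k n m : ℕ) (hk : 1 ≤ k) (a : Fin m → ℕ) (hpos : ∀ i, 1 ≤ a i)
    (hanti : Antitone a) (hn : ∑ i, a i = n) :
    let A : Set (Multiset ℕ) := {s | ∃ a' : Fin m → ℕ, (∀ i, a' i ≤ a i) ∧
      s = (k + n - ∑ i, a' i) ::ₘ
        ((Multiset.map a' Finset.univ.val).filter fun x => 0 < x)}
    ∃ s₀ ∈ A, ∀ s ∈ A, Dominates s s₀ := by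
  intro A
  classical
  have hmn : m ≤ n := by
    calc m = ∑ _i : Fin m, 1 := by simp
    _ ≤ ∑ i, a i := Finset.sum_le_sum (fun i _ => hpos i)
    _ = n := hn
  -- the filter-card lemma on Fin m
  have card_lt : ∀ c : ℕ,
      (Finset.univ.filter (fun i : Fin m => (i : ℕ) < c)).card = min c m := by
    intro c
    rw [Finset.card_filter]
    rw [Fin.sum_univ_eq_sum_range (fun j => if j < c then 1 else 0) m]
    rw [← Finset.card_filter]
    have : (Finset.range m).filter (fun j => j < c) = Finset.range (min c m) := by
      ext j; simp only [Finset.mem_filter, Finset.mem_range]; omega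
    rw [this, Finset.card_range]
  -- the water level v
  set P1 : ℕ → Prop := fun t => t + ∑ i, min (a i) t ≤ k + n with hP1def
  have hP1 : P1 1 := by
    have : ∑ i, min (a i) 1 = ∑ _i : Fin m, 1 :=
      Finset.sum_congr rfl (fun i _ => by have := hpos i; omega)
    simp only [P1]
    rw [this]; simp; omega
  set v := Nat.findGreatest P1 (k + n) with hv
  have hv1 : 1 ≤ v := Nat.le_findGreatest (by omega) hP1
  have hvP0 : v + ∑ i, min (a i) v ≤ k + n := Nat.findGreatest_spec (by omega) hP1
  set f : Fin m → ℕ := fun i => min (a i) v with hf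
  have hvP : v + ∑ i, f i ≤ k + n := hvP0
  have hfeta : Finset.univ.sum f = ∑ i, f i := rfl
  clear_value f
  have hvmax : ¬ ((v+1) + ∑ i, min (a i) (v+1) ≤ k + n) := by
    by_cases h : v + 1 ≤ k + n
    · have h2 := Nat.findGreatest_is_greatest (P := P1) (k := v + 1) (n := k + n)
        (by rw [← hv]; omega) h
      simpa only [hP1def] using h2
    · intro hcon; omega
  clear_value v
  clear hP1 hv hP1def
  clear P1
  set ρ := k + n - (v + ∑ i, f i) with hρdef
  clear_value ρ
  have hρ : v + ∑ i, f i + ρ = k + n := by omega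
  set C := Finset.univ.filter (fun i : Fin m => v + 1 ≤ a i) with hC
  clear_value C
  have hsum_min : ∑ i, min (a i) (v+1) = ∑ i, f i + C.card := by
    rw [hC, Finset.card_filter, ← Finset.sum_add_distrib]
    refine Finset.sum_congr rfl (fun i _ => ?_)
    simp only [hf]
    split <;> omega
  have hvmax2 : k + n < v + 1 + (∑ i, f i + C.card) := by
    rw [← hsum_min]; omega
  have hρC : ρ ≤ C.card := by omega
  have hCm : C.card ≤ m := by
    rw [hC]
    calc (Finset.univ.filter (fun i : Fin m => v + 1 ≤ a i)).card
        ≤ (Finset.univ : Finset (Fin m)).card := Finset.card_filter_le _ _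
    _ = m := by simp
  have hlow : ∀ j : Fin m, (j : ℕ) < C.card → v + 1 ≤ a j := by
    intro j hj
    by_contra hcon
    have hsub : C ⊆ Finset.univ.filter (fun i : Fin m => (i : ℕ) < (j : ℕ)) := by
      intro i hi
      simp only [hC, Finset.mem_filter, Finset.mem_univ, true_and] at hi ⊢
      by_contra hij
      push_neg at hij
      have : a i ≤ a j := hanti (by exact hij)
      omega
    have h2 := Finset.card_le_card hsub
    rw [card_lt] at h2
    have := j.isLt
    omega
  set e : Fin m → ℕ := fun i => if (i : ℕ) + 2 ≤ ρ then 1 else 0 with he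
  have heeta : Finset.univ.sum e = ∑ i, e i := rfl
  clear_value e
  have hsume : ∑ i, e i = ρ - 1 := by
    simp only [he]
    rw [Fin.sum_univ_eq_sum_range (fun j => if j + 2 ≤ ρ then 1 else 0) m]
    have h1 : ∀ j ∈ Finset.range m,
        (if j + 2 ≤ ρ then (1:ℕ) else 0) = if j < ρ - 1 then 1 else 0 := by
      intro j _; split <;> split <;> omega
    rw [Finset.sum_congr rfl h1, ← Finset.card_filter]
    have h2 : (Finset.range m).filter (fun j => j < ρ - 1) = Finset.range (ρ - 1) := by
      ext j; simp only [Finset.mem_filter, Finset.mem_range]; omega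
    rw [h2, Finset.card_range]
  have he1 : ∀ i : Fin m, e i = 1 → v + 1 ≤ a i := by
    intro i hi
    simp only [he] at hi
    by_cases h : (i : ℕ) + 2 ≤ ρ
    · exact hlow i (by omega)
    · simp [h] at hi
  set b : Fin m → ℕ := fun i => f i + e i with hb
  have hbeta : Finset.univ.sum b = ∑ i, b i := rfl
  clear_value b
  have hfpos : ∀ i, 1 ≤ f i := fun i => by rw [hf]; exact le_min (hpos i) hv1
  have hfv : ∀ i, f i ≤ v := fun i => by rw [hf]; exact min_le_right _ _
  have hble : ∀ i, b i ≤ a i := by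
    intro i
    simp only [hb]
    by_cases h : e i = 1
    · have h2 := he1 i h
      have : f i = v := by simp only [hf]; omega
      omega
    · have h0 : e i = 0 := by
        have : e i = 1 ∨ e i = 0 := by
          simp only [he]; split
          exacts [Or.inl rfl, Or.inr rfl]
        tauto
      have : f i ≤ a i := by rw [hf]; exact min_le_left _ _
      omega
  have hsumb : ∑ i, b i = ∑ i, f i + (ρ - 1) := by
    simp only [hb]
    rw [Finset.sum_add_distrib, hsume]
  have hsumble : ∑ i, b i ≤ n := by
    calc ∑ i, b i ≤ ∑ i, a i := Finset.sum_le_sum (fun i _ => hble i)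
    _ = n := hn
  set K0 := k + n - ∑ i, b i with hK0
  have hK0v : K0 + (ρ - 1) = v + ρ := by omega
  set μ := (k + n - ∑ i, b i) ::ₘ
      ((Multiset.map b Finset.univ.val).filter fun x => 0 < x) with hμ
  have hμA : μ ∈ A := ⟨b, hble, rfl⟩
  have hfilt : (Multiset.map b Finset.univ.val).filter (fun x => 0 < x)
      = Multiset.map b Finset.univ.val := by
    rw [Multiset.filter_eq_self]
    intro x hx
    rcases Multiset.mem_map.1 hx with ⟨i, _, rfl⟩
    have := hfpos i
    simp only [hb]; omega
  have hμ' : μ = K0 ::ₘ Multiset.map b Finset.univ.val := by rw [hμ, hfilt]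
  have hμsum : Multiset.sum (Multiset.map b Finset.univ.val) = ∑ i, b i := rfl
  clear_value K0 μ
  refine ⟨μ, hμA, ?_⟩
  rintro s ⟨a', ha'le, rfl⟩
  intro r
  set K := k + n - ∑ i, a' i with hK
  have hsa' : ∑ i, a' i ≤ n := by
    calc ∑ i, a' i ≤ ∑ i, a i := Finset.sum_le_sum (fun i _ => ha'le i)
    _ = n := hn
  have hKeq : K + ∑ i, a' i = k + n := by omega
  clear_value K
  rcases Nat.eq_zero_or_pos r with hr0 | hr1
  · subst hr0
    simp [Stmt18.topSum_zero]
  set B := (Multiset.map a' Finset.univ.val).filter (fun x => 0 < x) with hB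
  set P := Finset.univ.filter (fun i : Fin m => v + 1 ≤ a' i) with hP
  have hPa : ∀ i ∈ P, v + 1 ≤ a' i := by
    intro i hi; simp only [hP, Finset.mem_filter] at hi; exact hi.2
  by_cases hcase : r ≤ P.card
  -- CASE A
  · obtain ⟨P', hP'sub, hP'card⟩ := Finset.exists_subset_card_eq hcase
    have ht_le : Multiset.map a' P'.val ≤ K ::ₘ B := by
      refine le_trans ?_ (Multiset.le_cons_self _ _)
      rw [hB, Multiset.le_filter]
      constructor
      · exact Multiset.map_le_map (Finset.val_le_iff.2 (fun i hi => Finset.mem_univ i))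
      · intro x hx
        rcases Multiset.mem_map.1 hx with ⟨i, hi, rfl⟩
        have : i ∈ P := hP'sub hi
        have := hPa i this
        omega
    have hcard : Multiset.card (Multiset.map a' P'.val) ≤ r := by
      rw [Multiset.card_map]
      exact le_of_eq hP'card
    have hlb := Stmt18.sum_le_topSum _ _ r ht_le hcard
    have hsum_ge : r * (v+1) ≤ (Multiset.map a' P'.val).sum := by
      have h1 : (Multiset.map a' P'.val).sum = ∑ i ∈ P', a' i := rfl
      rw [h1]
      calc r * (v+1) = P'.card * (v+1) := by rw [hP'card]
      _ = ∑ _i ∈ P', (v+1) := by rw [Finset.sum_const, smul_eq_mul]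
      _ ≤ ∑ i ∈ P', a' i :=
        Finset.sum_le_sum (fun i hi => hPa i (hP'sub hi))
    have hub : topSum μ r ≤ r * (v+1) := by
      have h1 := Stmt18.topSum_le_bound μ r (v+1)
      have h2 : (μ.map (fun x => x - (v+1))).sum = 0 := by
        rw [hμ', Multiset.map_cons, Multiset.sum_cons, Multiset.map_map]
        have hK0le : K0 - (v+1) = 0 := by omega
        have h3 : (Multiset.map ((fun x => x - (v+1)) ∘ b) Finset.univ.val).sum = 0 := by
          apply Multiset.sum_eq_zero
          intro x hx
          rcases Multiset.mem_map.1 hx with ⟨i, _, rfl⟩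
          have := hfv i
          have : b i ≤ v + 1 := by
            simp only [hb, he]; split <;> omega
          simp only [Function.comp]
          omega
        rw [h3, hK0le]
      omega
    omega
  -- CASE B
  · push_neg at hcase
    have hPm : P.card ≤ m := by
      calc P.card ≤ Finset.univ.card := Finset.card_filter_le _ _
      _ = m := by simp
    set q := min (r-1) m with hq
    have hpq : P.card ≤ q := by omega
    have hqm : q ≤ m := min_le_right _ _
    have hqr : q ≤ r - 1 := min_le_left _ _
    set Fq := Finset.univ.filter (fun i : Fin m => (i : ℕ) < q) with hFq
    have hFqcard : Fq.card = q := by rw [hFq, card_lt]; omega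
    have hinter : (Fq ∩ P).card ≤ P.card := Finset.card_le_card Finset.inter_subset_right
    have hdiffcard : (Fq \ P).card = q - (Fq ∩ P).card := by
      rw [← Finset.sdiff_inter_self_left Fq P,
        Finset.card_sdiff_of_subset Finset.inter_subset_left, hFqcard]
    obtain ⟨S, hSsub, hScard⟩ :=
      Finset.exists_subset_card_eq (s := Fq \ P) (n := q - P.card) (by omega)
    have hdisj : Disjoint P S := by
      have h1 : Disjoint (Fq \ P) P := Finset.sdiff_disjoint
      exact (h1.mono_left hSsub).symm
    set T := P ∪ S with hT
    have hTcard : T.card = q := by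
      rw [hT, Finset.card_union_of_disjoint hdisj, hScard]
      omega
    have hPT : P ⊆ T := Finset.subset_union_left
    -- sums over T dominate sums over Fq
    have hfP : ∀ i ∈ P, f i = v := by
      intro i hi
      have h1 := hPa i hi
      have h2 := ha'le i
      simp only [hf]
      omega
    have hsum_T_ge : ∑ i ∈ Fq, f i ≤ ∑ i ∈ T, f i := by
      have e1 : ∑ i ∈ T, f i = ∑ i ∈ P, f i + ∑ i ∈ S, f i := Finset.sum_union hdisj
      have e2 : ∑ i ∈ P, f i = P.card * v := by
        rw [Finset.sum_congr rfl hfP, Finset.sum_const, smul_eq_mul]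
      have e3 : ∑ i ∈ Fq ∩ P, f i + ∑ i ∈ Fq \ P, f i = ∑ i ∈ Fq, f i :=
        Finset.sum_inter_add_sum_sdiff _ _ _
      have e4 : ∑ i ∈ (Fq \ P) \ S, f i + ∑ i ∈ S, f i = ∑ i ∈ Fq \ P, f i :=
        Finset.sum_sdiff hSsub
      have e5 : ∑ i ∈ (Fq \ P) \ S, f i ≤ ((Fq \ P) \ S).card * v := by
        have := Finset.sum_le_card_nsmul ((Fq \ P) \ S) f v (fun i _ => hfv i)
        simpa [smul_eq_mul] using this
      have e6 : ((Fq \ P) \ S).card = P.card - (Fq ∩ P).card := by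
        rw [Finset.card_sdiff_of_subset hSsub, hdiffcard, hScard]
        omega
      have e7 : ∑ i ∈ Fq ∩ P, f i ≤ (Fq ∩ P).card * v := by
        have := Finset.sum_le_card_nsmul (Fq ∩ P) f v (fun i _ => hfv i)
        simpa [smul_eq_mul] using this
      have e8 : (Fq ∩ P).card * v + (P.card - (Fq ∩ P).card) * v = P.card * v := by
        rw [← Nat.add_mul]
        congr 1
        omega
      rw [e6] at e5
      omega
    -- lower bound for topSum s r
    set t0 := K ::ₘ (Multiset.map a' T.val).filter (fun x => 0 < x) with ht0
    have ht0le : t0 ≤ K ::ₘ B := by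
      rw [ht0, hB]
      exact Multiset.cons_le_cons K (Multiset.filter_le_filter _
        (Multiset.map_le_map (Finset.val_le_iff.2 (fun i _ => Finset.mem_univ i))))
    have ht0card : Multiset.card t0 ≤ r := by
      rw [ht0, Multiset.card_cons]
      have h1 : Multiset.card ((Multiset.map a' T.val).filter (fun x => 0 < x))
          ≤ Multiset.card (Multiset.map a' T.val) :=
        Multiset.card_le_card (Multiset.filter_le _ _)
      rw [Multiset.card_map] at h1
      have : Multiset.card T.val = T.card := rfl
      omega
    have ht0sum : t0.sum = K + ∑ i ∈ T, a' i := by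
      rw [ht0, Multiset.sum_cons, Stmt18.filter_pos_sum]
      rfl
    have hlb := Stmt18.sum_le_topSum t0 _ r ht0le ht0card
    have hsplit1 : ∑ i ∈ T, a' i + ∑ i ∈ Finset.univ \ T, a' i = ∑ i, a' i := by
      rw [add_comm]
      exact Finset.sum_sdiff (Finset.subset_univ T)
    have hsplit2 : ∑ i ∈ T, f i + ∑ i ∈ Finset.univ \ T, f i = ∑ i, f i := by
      rw [add_comm]
      exact Finset.sum_sdiff (Finset.subset_univ T)
    have hcompl : ∑ i ∈ Finset.univ \ T, a' i ≤ ∑ i ∈ Finset.univ \ T, f i := by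
      refine Finset.sum_le_sum (fun i hi => ?_)
      have hiT : i ∉ T := (Finset.mem_sdiff.1 hi).2
      have hiP : i ∉ P := fun h => hiT (hPT h)
      have : ¬ (v + 1 ≤ a' i) := by
        intro h
        exact hiP (by simp only [hP, Finset.mem_filter]; exact ⟨Finset.mem_univ i, h⟩)
      have h2 := ha'le i
      simp only [hf]
      omega
    have hKT : v + ρ + ∑ i ∈ Fq, f i ≤ K + ∑ i ∈ T, a' i := by omega
    -- upper bound for topSum μ r
    have hub : topSum μ r ≤ v + ρ + ∑ i ∈ Fq, f i := by
      rw [hμ']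
      by_cases hqlt : q < m
      · set i0 : Fin m := ⟨q, hqlt⟩ with hi0
        have hi0val : (i0 : ℕ) = q := rfl
        set c := b i0 with hc
        have h1 := Stmt18.topSum_le_bound (K0 ::ₘ Multiset.map b Finset.univ.val) r c
        rw [Multiset.map_cons, Multiset.sum_cons, Multiset.map_map] at h1
        have hbanti : ∀ i j : Fin m, i ≤ j → b j ≤ b i := by
          intro i j hij
          simp only [hb, he]
          have h2 : f j ≤ f i := by rw [hf]; exact min_le_min (hanti hij) le_rfl
          have h3 : (i : ℕ) ≤ (j : ℕ) := hij
          split <;> split <;> omega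
        have hmapsum : (Multiset.map ((fun x => x - c) ∘ b) Finset.univ.val).sum
            = ∑ i, (b i - c) := rfl
        have hzero : ∀ i : Fin m, q ≤ (i : ℕ) → b i - c = 0 := by
          intro i hi
          have := hbanti i0 i (by simp only [hi0, Fin.le_def]; exact hi)
          omega
        have hsum_split : ∑ i, (b i - c) = ∑ i ∈ Fq, (b i - c) := by
          rw [← Finset.sum_filter_add_sum_filter_not Finset.univ
            (fun i : Fin m => (i : ℕ) < q) (fun i => b i - c)]
          have hz : ∑ i ∈ Finset.univ.filter (fun i : Fin m => ¬ (i : ℕ) < q),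
              (b i - c) = 0 := by
            refine Finset.sum_eq_zero (fun i hi => ?_)
            have : ¬ (i : ℕ) < q := (Finset.mem_filter.1 hi).2
            exact hzero i (by omega)
          rw [hz, hFq, add_zero]
        have hcb : ∀ i ∈ Fq, c ≤ b i := by
          intro i hi
          have : (i : ℕ) < q := (Finset.mem_filter.1 hi).2
          exact hbanti i i0 (by simp only [hi0, Fin.le_def]; omega)
        have hcfe : c = f i0 + e i0 := by rw [hc, hb]
        have hck : c ≤ K0 := by
          by_cases h2 : (i0 : ℕ) + 2 ≤ ρ
          · have he2 : e i0 = 1 := by simp only [he]; rw [if_pos h2]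
            have hai0 : v + 1 ≤ a i0 := hlow i0 (by omega)
            have hfi0 : f i0 = v := by simp only [hf]; omega
            rw [hcfe, hfi0, he2]
            omega
          · have he2 : e i0 = 0 := by simp only [he]; rw [if_neg h2]
            have := hfv i0
            rw [hcfe, he2]
            omega
        have hrq : r = q + 1 := by omega
        have hrc : r * c = q * c + c := by rw [hrq]; ring
        have hsum_bc : q * c + ∑ i ∈ Fq, (b i - c) = ∑ i ∈ Fq, b i := by
          calc q * c + ∑ i ∈ Fq, (b i - c)
              = ∑ _i ∈ Fq, c + ∑ i ∈ Fq, (b i - c) := by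
                rw [Finset.sum_const, hFqcard, smul_eq_mul]
          _ = ∑ i ∈ Fq, (c + (b i - c)) := by rw [← Finset.sum_add_distrib]
          _ = ∑ i ∈ Fq, b i := Finset.sum_congr rfl (fun i hi => by
                have := hcb i hi; omega)
        have hsum_be : ∑ i ∈ Fq, b i = ∑ i ∈ Fq, f i + ∑ i ∈ Fq, e i := by
          simp only [hb]
          rw [Finset.sum_add_distrib]
        have he_le : ∑ i ∈ Fq, e i ≤ ∑ i, e i :=
          Finset.sum_le_sum_of_subset (Finset.subset_univ Fq)
        rw [hmapsum, hsum_split] at h1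
        calc topSum (K0 ::ₘ Multiset.map b Finset.univ.val) r
            ≤ r * c + (K0 - c + ∑ i ∈ Fq, (b i - c)) := h1
        _ = (K0 - c + c) + (q * c + ∑ i ∈ Fq, (b i - c)) := by rw [hrc]; ring
        _ = K0 + ∑ i ∈ Fq, b i := by rw [hsum_bc]; omega
        _ = K0 + ∑ i ∈ Fq, f i + ∑ i ∈ Fq, e i := by rw [hsum_be]; ring
        _ ≤ v + ρ + ∑ i ∈ Fq, f i := by
            have := hsume
            omega
      · have hqm' : q = m := by omega
        have hFquniv : Fq = Finset.univ := by
          rw [hFq]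
          refine Finset.filter_true_of_mem (fun i _ => ?_)
          have := i.isLt
          omega
        have h1 := Stmt18.topSum_le_bound (K0 ::ₘ Multiset.map b Finset.univ.val) r 0
        have h2 : ((K0 ::ₘ Multiset.map b Finset.univ.val).map (fun x => x - 0)).sum
            = (K0 ::ₘ Multiset.map b Finset.univ.val).sum := by
          simp only [Nat.sub_zero, Multiset.map_id']
        rw [h2] at h1
        have h3 : (K0 ::ₘ Multiset.map b Finset.univ.val).sum = K0 + ∑ i, b i := by
          rw [Multiset.sum_cons, hμsum]
        rw [hFquniv]
        omega
    omega
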